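/- Let A, B, C be reals with 0 ≤ A ≤ B ≤ C and A < B < C. Define f(r) = (−1/(2r(r+1)²))A + ((3r²+2r+1)/(2r(r+1)²))B + (r²(2r+1)/(2r(r+1)²))C for r ∈ (0,1). Then f attains its minimum over (0,1) at r* = √(B−A)/√(C−B) (assuming r* ∈ (0,1)), with minimum value −(B² + B√(B−A)√(C−B) − C(A + √(B−A)√(C−B)))/(A − 2B + C). -/

import Mathlib

theorem stmt_14 (A B C : ℝ) (hA : 0 ≤ A) (hAB : A < B) (hBC : B < C)
    (f : ℝ → ℝ)
    (hf : ∀ r, f r = (-1 / (2 * r * (r + 1) ^ 2)) * A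
        + ((3 * r ^ 2 + 2 * r + 1) / (2 * r * (r + 1) ^ 2)) * B
        + (r ^ 2 * (2 * r + 1) / (2 * r * (r + 1) ^ 2)) * C)
    (rstar : ℝ) (hrstar : rstar = Real.sqrt (B - A) / Real.sqrt (C - B))
    (hrstar1 : rstar < 1) :
    (∀ r ∈ Set.Ioo (0 : ℝ) 1, f rstar ≤ f r) ∧
    f rstar = -(B ^ 2 + B * Real.sqrt (B - A) * Real.sqrt (C - B)
        - C * (A + Real.sqrt (B - A) * Real.sqrt (C - B))) / (A - 2 * B + C) := by
  set s := Real.sqrt (B - A) with hs_def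
  set t := Real.sqrt (C - B) with ht_def
  have hs : 0 < s := Real.sqrt_pos.mpr (by linarith)
  have ht : 0 < t := Real.sqrt_pos.mpr (by linarith)
  have hs2 : s ^ 2 = B - A := Real.sq_sqrt (by linarith)
  have ht2 : t ^ 2 = C - B := Real.sq_sqrt (by linarith)
  have hst : s < t := by
    rw [hrstar, div_lt_one ht] at hrstar1; exact hrstar1
  have hA' : A = B - s ^ 2 := by linarith
  have hC' : C = B + t ^ 2 := by linarith
  have ht0 : t ≠ 0 := ne_of_gt ht
  have hs0 : s ≠ 0 := ne_of_gt hs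
  have hst0 : s + t ≠ 0 := by positivity
  have hst0' : s + t > 0 := by positivity
  have hfr : f rstar = B + s * t ^ 2 / (s + t) := by
    rw [hf, hrstar, hA', hC']
    field_simp
    ring
  constructor
  · intro r hr
    obtain ⟨hr0, hr1⟩ := hr
    have hr0' : r ≠ 0 := ne_of_gt hr0
    have hr1' : r + 1 ≠ 0 := by positivity
    have key : f r - f rstar
        = t ^ 3 * (r - s / t) ^ 2 * (2 * r + s / t + 1)
          / (2 * r * (r + 1) ^ 2 * (s + t)) := by
      rw [hf, hfr, hA', hC']
      field_simp
      ring
    have hpos : 0 ≤ t ^ 3 * (r - s / t) ^ 2 * (2 * r + s / t + 1)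
        / (2 * r * (r + 1) ^ 2 * (s + t)) := by
      have h1 : 0 < 2 * r + s / t + 1 := by positivity
      positivity
    linarith [key, hpos]
  · rw [hfr, hA', hC']
    have hden : B - s ^ 2 - 2 * B + (B + t ^ 2) ≠ 0 := by
      have : t ^ 2 - s ^ 2 > 0 := by nlinarith
      intro h; nlinarith
    rw [eq_div_iff hden]
    field_simp
    ring
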